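/- Let M = ⊕_{i=1}^{a} k_{S_i} and N = ⊕_{j=1}^{b} k_{T_j} be finite direct sums of staircase modules over ℝ², and let ε ≥ 0. Let M° = ⊕_{i=1}^{a} k_{S_i°} and N° = ⊕_{j=1}^{b} k_{T_j°}, where S° denotes the topological interior of S in ℝ². Then there exists an injective morphism f : M → N with ε-trivial cokernel if and only if there exists an injective morphism f° : M° → N° with ε-trivial cokernel. -/

import Mathlib

structure PersMod (F : Type) [Field F] where
  space : ℝ × ℝ → Type
  [isACG : ∀ p, AddCommGroup (space p)]
  [isMod : ∀ p, Module F (space p)]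
  map : ∀ {p q : ℝ × ℝ}, p ≤ q → (space p →ₗ[F] space q)
  map_id : ∀ p : ℝ × ℝ, map (le_refl p) = LinearMap.id
  map_comp : ∀ {p q r : ℝ × ℝ} (hpq : p ≤ q) (hqr : q ≤ r),
      map hqr ∘ₗ map hpq = map (le_trans hpq hqr)

attribute [instance] PersMod.isACG PersMod.isMod

variable {F : Type} [Field F]

/-- `f` is a morphism of persistence modules `M → N`. -/
def IsHom (M N : PersMod F) (f : ∀ p, M.space p →ₗ[F] N.space p) : Prop :=
  ∀ ⦃p q : ℝ × ℝ⦄ (h : p ≤ q), N.map h ∘ₗ f p = f q ∘ₗ M.map h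

/-- `f` is a morphism of persistence modules `M → N^ε` (the `ε`-shift of `N`). -/
def IsHomShift (M N : PersMod F) (ε : ℝ)
    (f : ∀ p : ℝ × ℝ, M.space p →ₗ[F] N.space (p + (ε, ε))) : Prop :=
  ∀ ⦃p q : ℝ × ℝ⦄ (h : p ≤ q),
    N.map (add_le_add h (le_refl ((ε : ℝ), (ε : ℝ)))) ∘ₗ f p = f q ∘ₗ M.map h

/-- `(f, g)` is an `ε`-interleaving between `M` and `N`. -/
def IsInterleaving (M N : PersMod F) (ε : ℝ)
    (f : ∀ p : ℝ × ℝ, M.space p →ₗ[F] N.space (p + (ε, ε)))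
    (g : ∀ p : ℝ × ℝ, N.space p →ₗ[F] M.space (p + (ε, ε))) : Prop :=
  IsHomShift M N ε f ∧ IsHomShift N M ε g ∧
  (∀ (p : ℝ × ℝ) (h : p ≤ p + (ε, ε) + (ε, ε)), g (p + (ε, ε)) ∘ₗ f p = M.map h) ∧
  (∀ (p : ℝ × ℝ) (h : p ≤ p + (ε, ε) + (ε, ε)), f (p + (ε, ε)) ∘ₗ g p = N.map h)

def upset (a : ℝ × ℝ) : Set (ℝ × ℝ) := {x | a ≤ x}

def IsStaircase (S : Set (ℝ × ℝ)) : Prop :=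
  ∃ A : Finset (ℝ × ℝ), A.Nonempty ∧ S = ⋃ a ∈ A, upset a

def UpClosed (U : Set (ℝ × ℝ)) : Prop :=
  ∀ ⦃p q : ℝ × ℝ⦄, p ≤ q → p ∈ U → q ∈ U

theorem IsStaircase.upClosed {S : Set (ℝ × ℝ)} (hS : IsStaircase S) : UpClosed S := by
  obtain ⟨A, -, rfl⟩ := hS
  intro p q hpq hp
  simp only [Set.mem_iUnion] at hp ⊢
  obtain ⟨a, ha, hpa⟩ := hp
  exact ⟨a, ha, le_trans hpa hpq⟩

open Classical in
/-- The fiber of the staircase module over `U` at `p` : `F` if `p ∈ U`, else `0`,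
realized as a submodule of `F`. -/
noncomputable def lineAt (F : Type) [Field F] (U : Set (ℝ × ℝ)) (p : ℝ × ℝ) :
    Submodule F F :=
  if p ∈ U then ⊤ else ⊥

/-- The interval (staircase) module `k_U` of an upward closed set `U`. -/
noncomputable def stairMod (F : Type) [Field F] (U : Set (ℝ × ℝ)) (hU : UpClosed U) :
    PersMod F where
  space p := ↥(lineAt F U p)
  map {p q} h := Submodule.inclusion (by
    by_cases hp : p ∈ U
    · simp [lineAt, hp, hU h hp]
    · simp [lineAt, hp])
  map_id p := rfl
  map_comp _ _ := rfl

/-- The element `1 ∈ F = (k_U)_p` for `p ∈ U`. -/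
noncomputable def unitVec (F : Type) [Field F] (U : Set (ℝ × ℝ)) (p : ℝ × ℝ)
    (hp : p ∈ U) : ↥(lineAt F U p) :=
  ⟨1, by simp [lineAt, hp]⟩

/-- The value in `F` of an element of the fiber of `k_U` at `p`. -/
noncomputable def valAt (F : Type) [Field F] (U : Set (ℝ × ℝ)) (p : ℝ × ℝ) :
    ↥(lineAt F U p) →ₗ[F] F :=
  (lineAt F U p).subtype

/-- Finite direct sums of persistence modules, defined pointwise. -/
noncomputable def dirSum {n : ℕ} (Ms : Fin n → PersMod F) : PersMod F where
  space p := ∀ i, (Ms i).space p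
  map h := LinearMap.pi fun i => (Ms i).map h ∘ₗ LinearMap.proj i
  map_id p := by
    refine LinearMap.ext fun x => funext fun i => ?_
    simp [(Ms i).map_id]
  map_comp hpq hqr := by
    refine LinearMap.ext fun x => funext fun i => ?_
    simpa using LinearMap.congr_fun ((Ms i).map_comp hpq hqr) (x i)

/-- Direct sum of staircase modules. -/
noncomputable def stairSum (F : Type) [Field F] {n : ℕ} (S : Fin n → Set (ℝ × ℝ))
    (hS : ∀ i, UpClosed (S i)) : PersMod F :=
  dirSum fun i => stairMod F (S i) (hS i)

/-- The `ε`-shift `S^ε = {x - (ε,ε) : x ∈ S}` of a set. -/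
def shiftSet (S : Set (ℝ × ℝ)) (ε : ℝ) : Set (ℝ × ℝ) := {x | x + (ε, ε) ∈ S}

/-- The directed shift distance `d_s(S,T) = min {ε ≥ 0 : S ⊆ T^ε}`. -/
noncomputable def dirDist (S T : Set (ℝ × ℝ)) : ℝ :=
  sInf {ε : ℝ | 0 ≤ ε ∧ S ⊆ shiftSet T ε}

/-- `M`, `N` are `ε`-interleaved. -/
def Interleaved (M N : PersMod F) (ε : ℝ) : Prop :=
  ∃ f g, IsInterleaving M N ε f g

/-- The interleaving distance. -/
noncomputable def interDist (M N : PersMod F) : ℝ :=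
  sInf {ε : ℝ | 0 ≤ ε ∧ Interleaved M N ε}

/-- `S` has a finite generating set all of whose members are `≤ u`. -/
theorem upClosed_of_gens {S : Set (ℝ × ℝ)} {u : ℝ × ℝ}
    (h : ∃ A : Finset (ℝ × ℝ), A.Nonempty ∧ S = (⋃ a ∈ A, upset a) ∧ ∀ a ∈ A, a ≤ u) :
    UpClosed S := by
  obtain ⟨A, hne, hSeq, -⟩ := h
  exact IsStaircase.upClosed ⟨A, hne, hSeq⟩

theorem mem_of_gens {S : Set (ℝ × ℝ)} {u v : ℝ × ℝ}
    (h : ∃ A : Finset (ℝ × ℝ), A.Nonempty ∧ S = (⋃ a ∈ A, upset a) ∧ ∀ a ∈ A, a ≤ u)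
    (huv : u ≤ v) : v ∈ S := by
  obtain ⟨A, ⟨a, ha⟩, rfl, hle⟩ := h
  exact Set.mem_biUnion ha (le_trans (hle a ha) huv)

/-- `f : M → N^ε` has `δ`-trivial kernel: the induced map `ker f_p → ker f_{p+(δ,δ)}`
is zero for all `p`. -/
def TrivialKerS (M N : PersMod F) (ε δ : ℝ)
    (f : ∀ p, M.space p →ₗ[F] N.space (p + (ε, ε))) : Prop :=
  ∀ (p : ℝ × ℝ) (x : M.space p), f p x = 0 → ∀ h : p ≤ p + (δ, δ), M.map h x = 0

/-- `f : M → N^ε` has `δ`-trivial cokernel: the induced map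
`coker f_p → coker f_{p+(δ,δ)}` is zero for all `p`. -/
def TrivialCokerS (M N : PersMod F) (ε δ : ℝ)
    (f : ∀ p, M.space p →ₗ[F] N.space (p + (ε, ε))) : Prop :=
  ∀ (p : ℝ × ℝ) (y : N.space (p + (ε, ε))) (h : p + (ε, ε) ≤ p + (δ, δ) + (ε, ε)),
    ∃ x : M.space (p + (δ, δ)), f (p + (δ, δ)) x = N.map h y

/-- `f : M → N` has `δ`-trivial kernel. -/
def TrivialKer (M N : PersMod F) (δ : ℝ) (f : ∀ p, M.space p →ₗ[F] N.space p) : Prop :=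
  ∀ (p : ℝ × ℝ) (x : M.space p), f p x = 0 → ∀ h : p ≤ p + (δ, δ), M.map h x = 0

/-- `f : M → N` has `δ`-trivial cokernel. -/
def TrivialCoker (M N : PersMod F) (δ : ℝ) (f : ∀ p, M.space p →ₗ[F] N.space p) : Prop :=
  ∀ (p : ℝ × ℝ) (y : N.space p) (h : p ≤ p + (δ, δ)),
    ∃ x : M.space (p + (δ, δ)), f (p + (δ, δ)) x = N.map h y

/-- The interior of an upward closed subset of `ℝ²` is upward closed. -/
theorem upClosed_interior {U : Set (ℝ × ℝ)} (hU : UpClosed U) :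
    UpClosed (interior U) := by
  intro p q hpq hp
  have hsub : (fun x : ℝ × ℝ => x - (q - p)) ⁻¹' interior U ⊆ U := fun x hx =>
    hU (sub_le_self x (sub_nonneg.mpr hpq)) (interior_subset hx)
  have hopen : IsOpen ((fun x : ℝ × ℝ => x - (q - p)) ⁻¹' interior U) :=
    isOpen_interior.preimage (continuous_id.sub continuous_const)
  have hq : q ∈ (fun x : ℝ × ℝ => x - (q - p)) ⁻¹' interior U := by
    show q - (q - p) ∈ interior U
    rwa [sub_sub_cancel]
  exact interior_maximal hsub hopen hq

/-- The dual persistence module: `(M*)_p = (M_{-p})^∨`. -/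
noncomputable def dualMod (M : PersMod F) : PersMod F where
  space p := Module.Dual F (M.space (-p))
  map {p q} h := (M.map (neg_le_neg h)).dualMap
  map_id p := by
    have h : M.map (neg_le_neg (le_refl p)) = LinearMap.id := M.map_id (-p)
    ext φ x
    simp [h]
  map_comp hpq hqr := by
    ext φ x
    have h := LinearMap.congr_fun (M.map_comp (neg_le_neg hqr) (neg_le_neg hpq)) x
    simp only [LinearMap.comp_apply, LinearMap.dualMap_apply] at h ⊢
    rw [h]


/-! ### Auxiliary machinery for the transfer theorem -/

section Transfer

theorem fiber_val_eq_zero {U : Set (ℝ × ℝ)} {p : ℝ × ℝ} (hp : p ∉ U)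
    (x : ↥(lineAt F U p)) : (x : F) = 0 := by
  have hx := x.2
  simp only [lineAt, if_neg hp, Submodule.mem_bot] at hx
  exact hx

/-- Abbreviation for a direct sum of staircase modules. -/
noncomputable def MS {n : ℕ} (U : Fin n → Set (ℝ × ℝ))
    (hU : ∀ k, UpClosed (U k)) : PersMod F :=
  dirSum fun i => stairMod F (U i) (hU i)

/-- The value in `F` of the `i`-th coordinate. -/
noncomputable def vv {n : ℕ} (U : Fin n → Set (ℝ × ℝ)) (hU : ∀ k, UpClosed (U k))
    {q : ℝ × ℝ} (x : (MS (F := F) U hU).space q) (i : Fin n) : F :=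
  valAt F (U i) q (x i)

theorem vv_ext {n : ℕ} {U : Fin n → Set (ℝ × ℝ)} {hU : ∀ k, UpClosed (U k)}
    {q : ℝ × ℝ} {x y : (MS (F := F) U hU).space q}
    (h : ∀ i, vv U hU x i = vv U hU y i) : x = y :=
  funext fun i => Subtype.ext (h i)

theorem vv_not_mem {n : ℕ} (U : Fin n → Set (ℝ × ℝ)) (hU : ∀ k, UpClosed (U k))
    {q : ℝ × ℝ} {x : (MS (F := F) U hU).space q} {i : Fin n} (h : q ∉ U i) :
    vv U hU x i = 0 :=
  fiber_val_eq_zero h (x i)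

theorem vv_zero {n : ℕ} (U : Fin n → Set (ℝ × ℝ)) (hU : ∀ k, UpClosed (U k))
    {q : ℝ × ℝ} (i : Fin n) : vv U hU (0 : (MS (F := F) U hU).space q) i = 0 := rfl

theorem vv_map {n : ℕ} (U : Fin n → Set (ℝ × ℝ)) (hU : ∀ k, UpClosed (U k))
    {p q : ℝ × ℝ} (h : p ≤ q) (x : (MS (F := F) U hU).space p) (i : Fin n) :
    vv U hU ((MS (F := F) U hU).map h x) i = vv U hU x i := rfl

/-- `vv` bundled as a linear map. -/
noncomputable def vL {n : ℕ} (U : Fin n → Set (ℝ × ℝ)) (hU : ∀ k, UpClosed (U k))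
    (q : ℝ × ℝ) (i : Fin n) : (MS (F := F) U hU).space q →ₗ[F] F where
  toFun x := vv U hU x i
  map_add' x y := map_add (valAt F (U i) q) (x i) (y i)
  map_smul' c x := map_smul (valAt F (U i) q) c (x i)

theorem vv_smul {n : ℕ} (U : Fin n → Set (ℝ × ℝ)) (hU : ∀ k, UpClosed (U k))
    {q : ℝ × ℝ} (c : F) (x : (MS (F := F) U hU).space q) (i : Fin n) :
    vv U hU (c • x) i = c * vv U hU x i :=
  map_smul (valAt F (U i) q) c (x i)

theorem vv_sum {n m : ℕ} (U : Fin n → Set (ℝ × ℝ)) (hU : ∀ k, UpClosed (U k))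
    {q : ℝ × ℝ} (w : Fin m → (MS (F := F) U hU).space q) (i : Fin n) :
    vv U hU (∑ k, w k) i = ∑ k, vv U hU (w k) i :=
  map_sum (vL U hU q i) w Finset.univ

open Classical in
/-- Basis vector at coordinate `i`. -/
noncomputable def eV {n : ℕ} (U : Fin n → Set (ℝ × ℝ)) (hU : ∀ k, UpClosed (U k))
    (i : Fin n) (q : ℝ × ℝ) : (MS (F := F) U hU).space q :=
  fun k => if h : k = i ∧ q ∈ U k then ⟨1, by simp [lineAt, h.2]⟩ else 0

theorem vv_eV_self {n : ℕ} (U : Fin n → Set (ℝ × ℝ)) (hU : ∀ k, UpClosed (U k))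
    {i : Fin n} {q : ℝ × ℝ} (h : q ∈ U i) :
    vv U hU (eV (F := F) U hU i q) i = 1 := by
  simp only [vv, eV, dif_pos (⟨rfl, h⟩ : i = i ∧ q ∈ U i)]
  simp [h, valAt]

theorem vv_eV_ne {n : ℕ} (U : Fin n → Set (ℝ × ℝ)) (hU : ∀ k, UpClosed (U k))
    {i k : Fin n} {q : ℝ × ℝ} (h : k ≠ i) :
    vv U hU (eV (F := F) U hU i q) k = 0 := by
  simp only [vv, eV, dif_neg (fun hc : k = i ∧ q ∈ U k => h hc.1)]
  simp [h, valAt]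
  rfl

theorem vv_eV_not_mem {n : ℕ} (U : Fin n → Set (ℝ × ℝ)) (hU : ∀ k, UpClosed (U k))
    {i k : Fin n} {q : ℝ × ℝ} (h : q ∉ U k) :
    vv U hU (eV (F := F) U hU i q) k = 0 := by
  simp only [vv, eV, dif_neg (fun hc : k = i ∧ q ∈ U k => h hc.2)]
  simp [h, valAt]
  rfl

theorem decomp {n : ℕ} (U : Fin n → Set (ℝ × ℝ)) (hU : ∀ k, UpClosed (U k))
    {q : ℝ × ℝ} (x : (MS (F := F) U hU).space q) :
    x = ∑ i, vv U hU x i • eV (F := F) U hU i q := by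
  apply vv_ext
  intro k
  have h1 : vv U hU (∑ i, vv U hU x i • eV (F := F) U hU i q) k
      = ∑ i, vv U hU x i * vv U hU (eV (F := F) U hU i q) k := by
    rw [vv_sum]
    exact Finset.sum_congr rfl fun i _ => vv_smul U hU _ _ k
  rw [h1, Finset.sum_eq_single k]
  · by_cases hk : q ∈ U k
    · rw [vv_eV_self U hU hk, mul_one]
    · rw [vv_not_mem U hU hk, vv_eV_not_mem U hU hk, zero_mul]
  · intro i _ hik
    rw [vv_eV_ne U hU (Ne.symm hik), mul_zero]
  · intro h; exact absurd (Finset.mem_univ k) h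

variable {a b : ℕ}

/-- Matrix coefficient of a family of linear maps between staircase sums. -/
noncomputable def cf (U : Fin a → Set (ℝ × ℝ)) (V : Fin b → Set (ℝ × ℝ))
    (hU : ∀ k, UpClosed (U k)) (hV : ∀ k, UpClosed (V k))
    (f : ∀ p, (MS (F := F) U hU).space p →ₗ[F] (MS (F := F) V hV).space p)
    (j : Fin b) (i : Fin a) (q : ℝ × ℝ) : F :=
  vv V hV (f q (eV (F := F) U hU i q)) j

theorem cf_zero {U : Fin a → Set (ℝ × ℝ)} {V : Fin b → Set (ℝ × ℝ)}
    {hU : ∀ k, UpClosed (U k)} {hV : ∀ k, UpClosed (V k)}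
    {f : ∀ p, (MS (F := F) U hU).space p →ₗ[F] (MS (F := F) V hV).space p}
    {j : Fin b} {i : Fin a} {q : ℝ × ℝ} (hj : q ∉ V j) :
    cf U V hU hV f j i q = 0 :=
  vv_not_mem V hV hj

theorem apply_vv {U : Fin a → Set (ℝ × ℝ)} {V : Fin b → Set (ℝ × ℝ)}
    {hU : ∀ k, UpClosed (U k)} {hV : ∀ k, UpClosed (V k)}
    (f : ∀ p, (MS (F := F) U hU).space p →ₗ[F] (MS (F := F) V hV).space p)
    {q : ℝ × ℝ} (x : (MS (F := F) U hU).space q) (j : Fin b) :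
    vv V hV (f q x) j = ∑ i, cf U V hU hV f j i q * vv U hU x i := by
  conv_lhs => rw [decomp U hU x]
  rw [map_sum, vv_sum]
  refine Finset.sum_congr rfl fun i _ => ?_
  rw [map_smul, vv_smul, mul_comm]
  rfl

theorem cf_const {U : Fin a → Set (ℝ × ℝ)} {V : Fin b → Set (ℝ × ℝ)}
    {hU : ∀ k, UpClosed (U k)} {hV : ∀ k, UpClosed (V k)}
    {f : ∀ p, (MS (F := F) U hU).space p →ₗ[F] (MS (F := F) V hV).space p}
    (hf : IsHom (MS (F := F) U hU) (MS (F := F) V hV) f)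
    {p q : ℝ × ℝ} (hpq : p ≤ q) (i : Fin a) (hpi : p ∈ U i) (hqi : q ∈ U i) (j : Fin b) :
    cf U V hU hV f j i q = cf U V hU hV f j i p := by
  have he : (MS (F := F) U hU).map hpq (eV (F := F) U hU i p) = eV (F := F) U hU i q := by
    apply vv_ext
    intro k
    rw [vv_map]
    by_cases hk : k = i
    · subst hk
      rw [vv_eV_self U hU hpi, vv_eV_self U hU hqi]
    · rw [vv_eV_ne U hU hk, vv_eV_ne U hU hk]
  have h2 : (MS (F := F) V hV).map hpq (f p (eV (F := F) U hU i p))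
      = f q ((MS (F := F) U hU).map hpq (eV (F := F) U hU i p)) :=
    LinearMap.congr_fun (hf hpq) _
  calc cf U V hU hV f j i q
      = vv V hV (f q ((MS (F := F) U hU).map hpq (eV (F := F) U hU i p))) j := by
        rw [he]; rfl
    _ = vv V hV ((MS (F := F) V hV).map hpq (f p (eV (F := F) U hU i p))) j := by rw [← h2]
    _ = cf U V hU hV f j i p := vv_map V hV hpq _ j

/-- Build a morphism from a coefficient matrix. -/
noncomputable def bMap (U : Fin a → Set (ℝ × ℝ)) (V : Fin b → Set (ℝ × ℝ))
    (hU : ∀ k, UpClosed (U k)) (hV : ∀ k, UpClosed (V k))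
    (c : Fin b → Fin a → ℝ × ℝ → F)
    (H1 : ∀ (p : ℝ × ℝ) (j : Fin b) (i : Fin a), p ∈ U i → p ∉ V j → c j i p = 0)
    (p : ℝ × ℝ) : (MS (F := F) U hU).space p →ₗ[F] (MS (F := F) V hV).space p where
  toFun x := fun j => ⟨∑ i, c j i p * vv U hU x i, by
    by_cases hj : p ∈ V j
    · simp [lineAt, hj]
    · simp only [lineAt, if_neg hj, Submodule.mem_bot]
      refine Finset.sum_eq_zero fun i _ => ?_
      by_cases hi : p ∈ U i
      · rw [H1 p j i hi hj, zero_mul]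
      · rw [vv_not_mem U hU hi, mul_zero]⟩
  map_add' x y := funext fun j => Subtype.ext (by
    show (∑ i, c j i p * vv U hU (x + y) i)
        = (∑ i, c j i p * vv U hU x i) + (∑ i, c j i p * vv U hU y i)
    rw [← Finset.sum_add_distrib]
    refine Finset.sum_congr rfl fun i _ => ?_
    have : vv U hU (x + y) i = vv U hU x i + vv U hU y i :=
      map_add (valAt F (U i) p) (x i) (y i)
    rw [this, mul_add])
  map_smul' r x := funext fun j => Subtype.ext (by
    show (∑ i, c j i p * vv U hU (r • x) i) = r * ∑ i, c j i p * vv U hU x i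
    rw [Finset.mul_sum]
    refine Finset.sum_congr rfl fun i _ => ?_
    have : vv U hU (r • x) i = r * vv U hU x i :=
      map_smul (valAt F (U i) p) r (x i)
    rw [this]
    ring)

theorem bMap_vv {U : Fin a → Set (ℝ × ℝ)} {V : Fin b → Set (ℝ × ℝ)}
    {hU : ∀ k, UpClosed (U k)} {hV : ∀ k, UpClosed (V k)}
    (c : Fin b → Fin a → ℝ × ℝ → F) (H1 : ∀ (p : ℝ × ℝ) (j : Fin b) (i : Fin a),
      p ∈ U i → p ∉ V j → c j i p = 0)
    (p : ℝ × ℝ) (x : (MS (F := F) U hU).space p) (j : Fin b) :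
    vv V hV (bMap U V hU hV c H1 p x) j = ∑ i, c j i p * vv U hU x i := rfl

theorem bMap_isHom {U : Fin a → Set (ℝ × ℝ)} {V : Fin b → Set (ℝ × ℝ)}
    {hU : ∀ k, UpClosed (U k)} {hV : ∀ k, UpClosed (V k)}
    (c : Fin b → Fin a → ℝ × ℝ → F) (H1 : ∀ (p : ℝ × ℝ) (j : Fin b) (i : Fin a),
      p ∈ U i → p ∉ V j → c j i p = 0)
    (H2 : ∀ {p q : ℝ × ℝ}, p ≤ q → ∀ (j : Fin b) (i : Fin a),
      p ∈ U i → q ∈ U i → c j i q = c j i p) :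
    IsHom (MS (F := F) U hU) (MS (F := F) V hV) (bMap U V hU hV c H1) := by
  intro p q hpq
  apply LinearMap.ext
  intro x
  apply vv_ext
  intro j
  show vv V hV ((MS (F := F) V hV).map hpq (bMap U V hU hV c H1 p x)) j
      = vv V hV (bMap U V hU hV c H1 q ((MS (F := F) U hU).map hpq x)) j
  rw [vv_map, bMap_vv, bMap_vv]
  refine Finset.sum_congr rfl fun i _ => ?_
  rw [vv_map]
  by_cases hi : p ∈ U i
  · rw [H2 hpq j i hi (hU i hpq hi)]
  · rw [vv_not_mem U hU hi, mul_zero, mul_zero]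

/-! ### Interior / staircase geometry -/

theorem diag_le_diag {p q : ℝ × ℝ} (h : p ≤ q) {c d : ℝ} (hcd : c ≤ d) :
    p + (c, c) ≤ q + (d, d) :=
  ⟨by have := h.1; show p.1 + c ≤ q.1 + d; linarith,
   by have := h.2; show p.2 + c ≤ q.2 + d; linarith⟩

theorem diag_sub_le_sub {p q : ℝ × ℝ} (h : p ≤ q) {c d : ℝ} (hcd : d ≤ c) :
    p - (c, c) ≤ q - (d, d) :=
  ⟨by have := h.1; show p.1 - c ≤ q.1 - d; linarith,
   by have := h.2; show p.2 - c ≤ q.2 - d; linarith⟩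

theorem le_add_diag {p : ℝ × ℝ} {ε : ℝ} (hε : 0 ≤ ε) : p ≤ p + (ε, ε) :=
  ⟨by show p.1 ≤ p.1 + ε; linarith, by show p.2 ≤ p.2 + ε; linarith⟩

theorem mem_interior_iff_sub {U : Set (ℝ × ℝ)} (hU : UpClosed U) (p : ℝ × ℝ) :
    p ∈ interior U ↔ ∃ δ : ℝ, 0 < δ ∧ p - (δ, δ) ∈ U := by
  constructor
  · intro hp
    have hnhds : U ∈ nhds p := mem_interior_iff_mem_nhds.mp hp
    obtain ⟨r, hr, hball⟩ := Metric.mem_nhds_iff.mp hnhds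
    refine ⟨r / 2, by linarith, hball ?_⟩
    rw [Metric.mem_ball, Prod.dist_eq]
    have h1 : dist (p - ((r / 2 : ℝ), (r / 2 : ℝ))).1 p.1 = r / 2 := by
      show dist (p.1 - r / 2) p.1 = r / 2
      rw [Real.dist_eq]
      rw [show p.1 - r / 2 - p.1 = -(r / 2) by ring, abs_neg, abs_of_pos (by linarith)]
    have h2 : dist (p - ((r / 2 : ℝ), (r / 2 : ℝ))).2 p.2 = r / 2 := by
      show dist (p.2 - r / 2) p.2 = r / 2
      rw [Real.dist_eq]
      rw [show p.2 - r / 2 - p.2 = -(r / 2) by ring, abs_neg, abs_of_pos (by linarith)]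
    rw [h1, h2, max_self]
    linarith
  · rintro ⟨δ, hδ, hmem⟩
    have hsub : Set.Ioi (p.1 - δ) ×ˢ Set.Ioi (p.2 - δ) ⊆ U := by
      intro x hx
      exact hU (p := p - (δ, δ)) ⟨le_of_lt hx.1, le_of_lt hx.2⟩ hmem
    have hopen : IsOpen (Set.Ioi (p.1 - δ) ×ˢ Set.Ioi (p.2 - δ)) :=
      IsOpen.prod isOpen_Ioi isOpen_Ioi
    have hpmem : p ∈ Set.Ioi (p.1 - δ) ×ˢ Set.Ioi (p.2 - δ) :=
      ⟨by show p.1 - δ < p.1; linarith, by show p.2 - δ < p.2; linarith⟩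
    exact interior_maximal hsub hopen hpmem

theorem mem_interior_add {U : Set (ℝ × ℝ)} (hU : UpClosed U) {p : ℝ × ℝ}
    (hp : p ∈ U) {δ : ℝ} (hδ : 0 < δ) : p + (δ, δ) ∈ interior U := by
  rw [mem_interior_iff_sub hU]
  exact ⟨δ, hδ, by rw [add_sub_cancel_right]; exact hp⟩

theorem staircase_exists_above {S : Set (ℝ × ℝ)} (hS : IsStaircase S) {p : ℝ × ℝ}
    (hp : p ∉ S) : ∃ δ : ℝ, 0 < δ ∧ p + (δ, δ) ∉ S := by
  obtain ⟨A, hne, rfl⟩ := hS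
  have hg : ∀ a ∈ A, 0 < max (a.1 - p.1) (a.2 - p.2) := by
    intro a ha
    by_contra hle
    push_neg at hle
    have h1 : a.1 ≤ p.1 := by have := le_max_left (a.1 - p.1) (a.2 - p.2); linarith
    have h2 : a.2 ≤ p.2 := by have := le_max_right (a.1 - p.1) (a.2 - p.2); linarith
    exact hp (Set.mem_biUnion ha (⟨h1, h2⟩ : a ≤ p))
  set δ0 := A.inf' hne (fun a => max (a.1 - p.1) (a.2 - p.2)) with hδ0def
  have hδ0 : 0 < δ0 := by
    rw [hδ0def, Finset.lt_inf'_iff]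
    exact hg
  refine ⟨δ0 / 2, by linarith, fun hmem => ?_⟩
  rw [Set.mem_iUnion₂] at hmem
  obtain ⟨c, hc, hcle⟩ := hmem
  have hle : c ≤ p + (δ0 / 2, δ0 / 2) := hcle
  have h1 : c.1 ≤ p.1 + δ0 / 2 := hle.1
  have h2 : c.2 ≤ p.2 + δ0 / 2 := hle.2
  have h3 : δ0 ≤ max (c.1 - p.1) (c.2 - p.2) := Finset.inf'_le _ hc
  have h4 : max (c.1 - p.1) (c.2 - p.2) ≤ δ0 / 2 :=
    max_le (by linarith) (by linarith)
  linarith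

theorem exists_delta_int {n : ℕ} (hn : 0 < n) (W : Fin n → Set (ℝ × ℝ))
    (hW : ∀ k, UpClosed (W k)) (p : ℝ × ℝ) :
    ∃ δ : ℝ, 0 < δ ∧ ∀ k, p ∈ interior (W k) → p - (δ, δ) ∈ W k := by
  have h : ∀ k, ∃ δ : ℝ, 0 < δ ∧ (p ∈ interior (W k) → p - (δ, δ) ∈ W k) := by
    intro k
    by_cases hk : p ∈ interior (W k)
    · obtain ⟨δ, h1, h2⟩ := (mem_interior_iff_sub (hW k) p).mp hk
      exact ⟨δ, h1, fun _ => h2⟩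
    · exact ⟨1, one_pos, fun h' => absurd h' hk⟩
  choose d hd1 hd2 using h
  haveI : Nonempty (Fin n) := ⟨⟨0, hn⟩⟩
  refine ⟨Finset.univ.inf' Finset.univ_nonempty d, ?_, ?_⟩
  · rw [Finset.lt_inf'_iff]
    exact fun k _ => hd1 k
  · intro k hk
    have hle : Finset.univ.inf' Finset.univ_nonempty d ≤ d k :=
      Finset.inf'_le _ (Finset.mem_univ k)
    exact hW k (diag_sub_le_sub (le_refl p) hle) (hd2 k hk)

theorem exists_delta_stair {n : ℕ} (hn : 0 < n) (W : Fin n → Set (ℝ × ℝ))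
    (hW : ∀ k, IsStaircase (W k)) (p : ℝ × ℝ) :
    ∃ δ : ℝ, 0 < δ ∧ ∀ k, p + (δ, δ) ∈ W k → p ∈ W k := by
  have h : ∀ k, ∃ δ : ℝ, 0 < δ ∧ (p + (δ, δ) ∈ W k → p ∈ W k) := by
    intro k
    by_cases hk : p ∈ W k
    · exact ⟨1, one_pos, fun _ => hk⟩
    · obtain ⟨δ, h1, h2⟩ := staircase_exists_above (hW k) hk
      exact ⟨δ, h1, fun h' => absurd h' h2⟩
  choose d hd1 hd2 using h
  haveI : Nonempty (Fin n) := ⟨⟨0, hn⟩⟩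
  refine ⟨Finset.univ.inf' Finset.univ_nonempty d, ?_, ?_⟩
  · rw [Finset.lt_inf'_iff]
    exact fun k _ => hd1 k
  · intro k hk
    have hle : Finset.univ.inf' Finset.univ_nonempty d ≤ d k :=
      Finset.inf'_le _ (Finset.mem_univ k)
    exact hd2 k ((hW k).upClosed (diag_le_diag (le_refl p) hle) hk)

end Transfer


section ToInterior

variable {a b : ℕ} (S : Fin a → Set (ℝ × ℝ)) (T : Fin b → Set (ℝ × ℝ))
  (hS : ∀ i, UpClosed (S i)) (hT : ∀ j, UpClosed (T j))

open Classical in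
/-- The coefficient matrix of the induced morphism on interiors. -/
noncomputable def cInt
    (f : ∀ p, (MS (F := F) S hS).space p →ₗ[F] (MS (F := F) T hT).space p)
    (j : Fin b) (i : Fin a) (p : ℝ × ℝ) : F :=
  if h : p ∈ interior (S i) then
    cf S T hS hT f j i (p - (((mem_interior_iff_sub (hS i) p).mp h).choose,
      ((mem_interior_iff_sub (hS i) p).mp h).choose))
  else 0

theorem cInt_eq
    {f : ∀ p, (MS (F := F) S hS).space p →ₗ[F] (MS (F := F) T hT).space p}
    (hf : IsHom (MS (F := F) S hS) (MS (F := F) T hT) f)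
    {p : ℝ × ℝ} {δ : ℝ} (hδ : 0 < δ) (i : Fin a)
    (hmem : p - (δ, δ) ∈ S i) (j : Fin b) :
    cInt S T hS hT f j i p = cf S T hS hT f j i (p - (δ, δ)) := by
  have hp : p ∈ interior (S i) := (mem_interior_iff_sub (hS i) p).mpr ⟨δ, hδ, hmem⟩
  unfold cInt
  rw [dif_pos hp]
  obtain ⟨hδ0, hmem0⟩ := ((mem_interior_iff_sub (hS i) p).mp hp).choose_spec
  set δ0 := ((mem_interior_iff_sub (hS i) p).mp hp).choose with hδ0def
  set μ := min δ δ0 with hμdef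
  have h1 : p - (δ0, δ0) ≤ p - (μ, μ) := diag_sub_le_sub (le_refl p) (min_le_right δ δ0)
  have h2 : p - (δ, δ) ≤ p - (μ, μ) := diag_sub_le_sub (le_refl p) (min_le_left δ δ0)
  have hm : p - (μ, μ) ∈ S i := hS i h1 hmem0
  rw [← cf_const hf h1 i hmem0 hm j, cf_const hf h2 i hmem hm j]

theorem cInt_H1
    {f : ∀ p, (MS (F := F) S hS).space p →ₗ[F] (MS (F := F) T hT).space p}
    (hf : IsHom (MS (F := F) S hS) (MS (F := F) T hT) f) :
    ∀ (p : ℝ × ℝ) (j : Fin b) (i : Fin a), p ∈ interior (S i) → p ∉ interior (T j) →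
      cInt S T hS hT f j i p = 0 := by
  intro p j i hpi hpj
  obtain ⟨δ, hδ, hm⟩ := (mem_interior_iff_sub (hS i) p).mp hpi
  rw [cInt_eq S T hS hT hf hδ i hm j]
  refine cf_zero fun hc => hpj ?_
  exact (mem_interior_iff_sub (hT j) p).mpr ⟨δ, hδ, hc⟩

theorem cInt_H2
    {f : ∀ p, (MS (F := F) S hS).space p →ₗ[F] (MS (F := F) T hT).space p}
    (hf : IsHom (MS (F := F) S hS) (MS (F := F) T hT) f) :
    ∀ {p q : ℝ × ℝ}, p ≤ q → ∀ (j : Fin b) (i : Fin a),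
      p ∈ interior (S i) → q ∈ interior (S i) →
      cInt S T hS hT f j i q = cInt S T hS hT f j i p := by
  intro p q hpq j i hpi hqi
  obtain ⟨δp, hδp, hmp⟩ := (mem_interior_iff_sub (hS i) p).mp hpi
  obtain ⟨δq, hδq, hmq⟩ := (mem_interior_iff_sub (hS i) q).mp hqi
  set μ := min δp δq with hμdef
  have h1 : q - (δq, δq) ≤ q - (μ, μ) := diag_sub_le_sub (le_refl q) (min_le_right δp δq)
  have h2 : p - (δp, δp) ≤ q - (μ, μ) := diag_sub_le_sub hpq (min_le_left δp δq)
  have hqμ : q - (μ, μ) ∈ S i := hS i h1 hmq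
  rw [cInt_eq S T hS hT hf hδq i hmq j, cInt_eq S T hS hT hf hδp i hmp j,
    ← cf_const hf h1 i hmq hqμ j, cf_const hf h2 i hmp hqμ j]

theorem toInterior (ha : 0 < a) (hb : 0 < b) (ε : ℝ) (hε : 0 ≤ ε)
    (f : ∀ p, (MS (F := F) S hS).space p →ₗ[F] (MS (F := F) T hT).space p)
    (hf : IsHom (MS (F := F) S hS) (MS (F := F) T hT) f)
    (hinj : ∀ p, Function.Injective (f p))
    (hcok : TrivialCoker (MS (F := F) S hS) (MS (F := F) T hT) ε f) :
    ∃ g, IsHom (MS (F := F) (fun i => interior (S i)) (fun i => upClosed_interior (hS i)))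
          (MS (F := F) (fun j => interior (T j)) (fun j => upClosed_interior (hT j))) g ∧
        (∀ p, Function.Injective (g p)) ∧
        TrivialCoker (MS (F := F) (fun i => interior (S i)) (fun i => upClosed_interior (hS i)))
          (MS (F := F) (fun j => interior (T j)) (fun j => upClosed_interior (hT j))) ε g := by
  set Si : Fin a → Set (ℝ × ℝ) := fun i => interior (S i) with hSidef
  set Tj : Fin b → Set (ℝ × ℝ) := fun j => interior (T j) with hTjdef
  have hSi : ∀ i, UpClosed (Si i) := fun i => upClosed_interior (hS i)
  have hTj : ∀ j, UpClosed (Tj j) := fun j => upClosed_interior (hT j)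
  refine ⟨bMap Si Tj hSi hTj (cInt S T hS hT f) (cInt_H1 S T hS hT hf),
    bMap_isHom _ _ (cInt_H2 S T hS hT hf), ?_, ?_⟩
  · -- injectivity
    intro p
    rw [injective_iff_map_eq_zero]
    intro x hx
    obtain ⟨δ, hδ, hδS⟩ := exists_delta_int ha S hS p
    have hsum : ∀ j, ∑ i, cInt S T hS hT f j i p * vv Si hSi x i = 0 := by
      intro j
      calc ∑ i, cInt S T hS hT f j i p * vv Si hSi x i
          = vv Tj hTj (bMap Si Tj hSi hTj (cInt S T hS hT f) (cInt_H1 S T hS hT hf) p x) j :=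
            (bMap_vv _ _ p x j).symm
        _ = 0 := by rw [hx]; rfl
    let y : (MS (F := F) S hS).space (p - (δ, δ)) := fun i =>
      ⟨vv Si hSi x i, by
        by_cases hqi : p - (δ, δ) ∈ S i
        · simp [lineAt, hqi]
        · have hni : p ∉ Si i := fun hc => hqi (hδS i hc)
          rw [vv_not_mem Si hSi hni]
          simp [lineAt, hqi]⟩
    have hfy : f (p - (δ, δ)) y = 0 := by
      apply vv_ext
      intro j
      rw [apply_vv, vv_zero]
      rw [← hsum j]
      refine Finset.sum_congr rfl fun i _ => ?_
      by_cases hpi : p ∈ Si i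
      · rw [cInt_eq S T hS hT hf hδ i (hδS i hpi) j]
        rfl
      · rw [vv_not_mem Si hSi hpi, show vv S hS y i = vv Si hSi x i from rfl,
          vv_not_mem Si hSi hpi, mul_zero, mul_zero]
    have hy0 : y = 0 := hinj (p - (δ, δ)) (by rw [hfy, map_zero])
    apply vv_ext
    intro i
    rw [vv_zero]
    calc vv Si hSi x i = vv S hS y i := rfl
      _ = 0 := by rw [hy0]; rfl
  · -- trivial cokernel
    intro p y0 hle
    obtain ⟨δ, hδ, hδT⟩ := exists_delta_int hb T hT p
    set q := p - (δ, δ) with hqdef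
    let y' : (MS (F := F) T hT).space q := fun j =>
      ⟨vv Tj hTj y0 j, by
        by_cases hqj : q ∈ T j
        · simp [lineAt, hqj]
        · have hnj : p ∉ Tj j := fun hc => hqj (hδT j hc)
          rw [vv_not_mem Tj hTj hnj]
          simp [lineAt, hqj]⟩
    have hq2 : q ≤ q + (ε, ε) := le_add_diag hε
    obtain ⟨x', hx'⟩ := hcok q y' hq2
    have hpt : p + (ε, ε) - (δ, δ) = q + (ε, ε) := by
      rw [hqdef, sub_add_eq_add_sub]
    refine ⟨fun i => ⟨vv S hS x' i, ?_⟩, ?_⟩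
    · by_cases hpi : p + (ε, ε) ∈ Si i
      · simp only [hSidef] at hpi
        simp [lineAt, hpi]
      · have hni : q + (ε, ε) ∉ S i := by
          intro hc
          exact hpi ((mem_interior_iff_sub (hS i) _).mpr ⟨δ, hδ, by rw [hpt]; exact hc⟩)
        rw [vv_not_mem S hS hni]
        simp only [hSidef] at hpi
        simp [lineAt, hpi]
    · apply vv_ext
      intro j
      rw [vv_map]
      refine (bMap_vv _ _ _ _ j).trans ?_
      have hkey : ∀ j, vv T hT (f (q + (ε, ε)) x') j = vv Tj hTj y0 j := by
        intro j
        rw [hx', vv_map]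
        rfl
      calc ∑ i, cInt S T hS hT f j i (p + (ε, ε)) * vv S hS x' i
          = ∑ i, cf S T hS hT f j i (q + (ε, ε)) * vv S hS x' i := by
            refine Finset.sum_congr rfl fun i _ => ?_
            by_cases hqi : q + (ε, ε) ∈ S i
            · have : cInt S T hS hT f j i (p + (ε, ε))
                  = cf S T hS hT f j i (p + (ε, ε) - (δ, δ)) :=
                cInt_eq S T hS hT hf hδ i (by rw [hpt]; exact hqi) j
              rw [this, hpt]
            · rw [vv_not_mem S hS hqi, mul_zero, mul_zero]
        _ = vv T hT (f (q + (ε, ε)) x') j := (apply_vv f x' j).symm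
        _ = vv Tj hTj y0 j := hkey j

end ToInterior


section ToClosed

variable {a b : ℕ} {S : Fin a → Set (ℝ × ℝ)} {T : Fin b → Set (ℝ × ℝ)}
  (hS : ∀ i, IsStaircase (S i)) (hT : ∀ j, IsStaircase (T j))

/-- The coefficient matrix of the induced morphism on closures. -/
noncomputable def cCl
    (f : ∀ p, (MS (F := F) (fun i => interior (S i))
        (fun i => upClosed_interior (hS i).upClosed)).space p →ₗ[F]
      (MS (F := F) (fun j => interior (T j))
        (fun j => upClosed_interior (hT j).upClosed)).space p)
    (j : Fin b) (i : Fin a) (p : ℝ × ℝ) : F :=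
  cf (fun i => interior (S i)) (fun j => interior (T j))
    (fun i => upClosed_interior (hS i).upClosed)
    (fun j => upClosed_interior (hT j).upClosed) f j i (p + ((1 : ℝ), (1 : ℝ)))

theorem cCl_eq
    {f : ∀ p, (MS (F := F) (fun i => interior (S i))
        (fun i => upClosed_interior (hS i).upClosed)).space p →ₗ[F]
      (MS (F := F) (fun j => interior (T j))
        (fun j => upClosed_interior (hT j).upClosed)).space p}
    (hf : IsHom (MS (F := F) (fun i => interior (S i))
        (fun i => upClosed_interior (hS i).upClosed))
      (MS (F := F) (fun j => interior (T j))
        (fun j => upClosed_interior (hT j).upClosed)) f)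
    {p : ℝ × ℝ} {i : Fin a} (hpi : p ∈ S i) {δ : ℝ} (hδ : 0 < δ) (j : Fin b) :
    cCl hS hT f j i p = cf (fun i => interior (S i)) (fun j => interior (T j))
      (fun i => upClosed_interior (hS i).upClosed)
      (fun j => upClosed_interior (hT j).upClosed) f j i (p + (δ, δ)) := by
  set μ := min δ 1 with hμdef
  have hμ : 0 < μ := lt_min hδ one_pos
  have h1 : p + (μ, μ) ≤ p + ((1 : ℝ), (1 : ℝ)) := diag_le_diag (le_refl p) (min_le_right δ 1)
  have h2 : p + (μ, μ) ≤ p + (δ, δ) := diag_le_diag (le_refl p) (min_le_left δ 1)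
  have hm1 : p + ((1 : ℝ), (1 : ℝ)) ∈ interior (S i) :=
    mem_interior_add (hS i).upClosed hpi one_pos
  have hmμ : p + (μ, μ) ∈ interior (S i) := mem_interior_add (hS i).upClosed hpi hμ
  have hmδ : p + (δ, δ) ∈ interior (S i) := mem_interior_add (hS i).upClosed hpi hδ
  unfold cCl
  rw [cf_const hf h1 i hmμ hm1 j, cf_const hf h2 i hmμ hmδ j]

theorem cCl_H1
    {f : ∀ p, (MS (F := F) (fun i => interior (S i))
        (fun i => upClosed_interior (hS i).upClosed)).space p →ₗ[F]
      (MS (F := F) (fun j => interior (T j))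
        (fun j => upClosed_interior (hT j).upClosed)).space p}
    (hf : IsHom (MS (F := F) (fun i => interior (S i))
        (fun i => upClosed_interior (hS i).upClosed))
      (MS (F := F) (fun j => interior (T j))
        (fun j => upClosed_interior (hT j).upClosed)) f) :
    ∀ (p : ℝ × ℝ) (j : Fin b) (i : Fin a), p ∈ S i → p ∉ T j →
      cCl hS hT f j i p = 0 := by
  intro p j i hpi hpj
  obtain ⟨δ, hδ, hnm⟩ := staircase_exists_above (hT j) hpj
  rw [cCl_eq hS hT hf hpi hδ j]
  exact cf_zero fun hc => hnm (interior_subset hc)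

theorem cCl_H2
    {f : ∀ p, (MS (F := F) (fun i => interior (S i))
        (fun i => upClosed_interior (hS i).upClosed)).space p →ₗ[F]
      (MS (F := F) (fun j => interior (T j))
        (fun j => upClosed_interior (hT j).upClosed)).space p}
    (hf : IsHom (MS (F := F) (fun i => interior (S i))
        (fun i => upClosed_interior (hS i).upClosed))
      (MS (F := F) (fun j => interior (T j))
        (fun j => upClosed_interior (hT j).upClosed)) f) :
    ∀ {p q : ℝ × ℝ}, p ≤ q → ∀ (j : Fin b) (i : Fin a), p ∈ S i → q ∈ S i →
      cCl hS hT f j i q = cCl hS hT f j i p := by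
  intro p q hpq j i hpi hqi
  unfold cCl
  exact cf_const hf (diag_le_diag hpq (le_refl 1)) i
    (mem_interior_add (hS i).upClosed hpi one_pos)
    (mem_interior_add (hS i).upClosed hqi one_pos) j

theorem toClosed (ha : 0 < a) (hb : 0 < b) (ε : ℝ) (hε : 0 ≤ ε)
    (f : ∀ p, (MS (F := F) (fun i => interior (S i))
        (fun i => upClosed_interior (hS i).upClosed)).space p →ₗ[F]
      (MS (F := F) (fun j => interior (T j))
        (fun j => upClosed_interior (hT j).upClosed)).space p)
    (hf : IsHom (MS (F := F) (fun i => interior (S i))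
        (fun i => upClosed_interior (hS i).upClosed))
      (MS (F := F) (fun j => interior (T j))
        (fun j => upClosed_interior (hT j).upClosed)) f)
    (hinj : ∀ p, Function.Injective (f p))
    (hcok : TrivialCoker (MS (F := F) (fun i => interior (S i))
        (fun i => upClosed_interior (hS i).upClosed))
      (MS (F := F) (fun j => interior (T j))
        (fun j => upClosed_interior (hT j).upClosed)) ε f) :
    ∃ g, IsHom (MS (F := F) S (fun i => (hS i).upClosed))
          (MS (F := F) T (fun j => (hT j).upClosed)) g ∧
        (∀ p, Function.Injective (g p)) ∧
        TrivialCoker (MS (F := F) S (fun i => (hS i).upClosed))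
          (MS (F := F) T (fun j => (hT j).upClosed)) ε g := by
  set Si : Fin a → Set (ℝ × ℝ) := fun i => interior (S i) with hSidef
  set Tj : Fin b → Set (ℝ × ℝ) := fun j => interior (T j) with hTjdef
  have hSi : ∀ i, UpClosed (Si i) := fun i => upClosed_interior (hS i).upClosed
  have hTj : ∀ j, UpClosed (Tj j) := fun j => upClosed_interior (hT j).upClosed
  have hSc : ∀ i, UpClosed (S i) := fun i => (hS i).upClosed
  have hTc : ∀ j, UpClosed (T j) := fun j => (hT j).upClosed
  refine ⟨bMap S T hSc hTc (cCl hS hT f) (cCl_H1 hS hT hf),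
    bMap_isHom _ _ (cCl_H2 hS hT hf), ?_, ?_⟩
  · -- injectivity
    intro p
    rw [injective_iff_map_eq_zero]
    intro x hx
    have hsum : ∀ j, ∑ i, cCl hS hT f j i p * vv S hSc x i = 0 := by
      intro j
      calc ∑ i, cCl hS hT f j i p * vv S hSc x i
          = vv T hTc (bMap S T hSc hTc (cCl hS hT f) (cCl_H1 hS hT hf) p x) j :=
            (bMap_vv _ _ p x j).symm
        _ = 0 := by rw [hx]; rfl
    let x' : (MS (F := F) Si hSi).space (p + ((1 : ℝ), (1 : ℝ))) := fun i =>
      ⟨vv S hSc x i, by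
        by_cases hqi : p + ((1 : ℝ), (1 : ℝ)) ∈ Si i
        · simp only [lineAt, if_pos hqi]
          exact Submodule.mem_top
        · have hni : p ∉ S i := fun hc =>
            hqi (mem_interior_add (hS i).upClosed hc one_pos)
          rw [vv_not_mem S hSc hni]
          simp only [lineAt, if_neg hqi, Submodule.mem_bot]⟩
    have hfx' : f (p + ((1 : ℝ), (1 : ℝ))) x' = 0 := by
      apply vv_ext
      intro j
      rw [apply_vv, vv_zero]
      exact hsum j
    have hx'0 : x' = 0 := hinj (p + ((1 : ℝ), (1 : ℝ))) (by rw [hfx', map_zero])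
    apply vv_ext
    intro i
    rw [vv_zero]
    calc vv S hSc x i = vv Si hSi x' i := rfl
      _ = 0 := by rw [hx'0]; rfl
  · -- trivial cokernel
    intro p y0 hle
    obtain ⟨δ, hδ, hδS⟩ := exists_delta_stair ha S hS (p + (ε, ε))
    set q := p + (δ, δ) with hqdef
    let y' : (MS (F := F) Tj hTj).space q := fun j =>
      ⟨vv T hTc y0 j, by
        by_cases hqj : q ∈ Tj j
        · simp only [lineAt, if_pos hqj]
          exact Submodule.mem_top
        · have hnj : p ∉ T j := fun hc =>
            hqj (mem_interior_add (hT j).upClosed hc hδ)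
          rw [vv_not_mem T hTc hnj]
          simp only [lineAt, if_neg hqj, Submodule.mem_bot]⟩
    have hq2 : q ≤ q + (ε, ε) := le_add_diag hε
    obtain ⟨x', hx'⟩ := hcok q y' hq2
    have hpt : p + (ε, ε) + (δ, δ) = q + (ε, ε) := by
      rw [hqdef, add_right_comm]
    refine ⟨fun i => ⟨vv Si hSi x' i, ?_⟩, ?_⟩
    · by_cases hpi : p + (ε, ε) ∈ S i
      · simp only [lineAt, if_pos hpi]
        exact Submodule.mem_top
      · have hni : q + (ε, ε) ∉ Si i := by
          intro hc
          exact hpi (hδS i (by rw [hpt]; exact interior_subset hc))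
        rw [vv_not_mem Si hSi hni]
        simp only [lineAt, if_neg hpi, Submodule.mem_bot]
    · apply vv_ext
      intro j
      rw [vv_map]
      refine (bMap_vv _ _ _ _ j).trans ?_
      have hkey : vv Tj hTj (f (q + (ε, ε)) x') j = vv T hTc y0 j := by
        rw [hx', vv_map]
        rfl
      calc ∑ i, cCl hS hT f j i (p + (ε, ε)) * vv Si hSi x' i
          = ∑ i, cf Si Tj hSi hTj f j i (q + (ε, ε)) * vv Si hSi x' i := by
            refine Finset.sum_congr rfl fun i _ => ?_
            by_cases hqi : q + (ε, ε) ∈ Si i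
            · have hmem : p + (ε, ε) ∈ S i := hδS i (by rw [hpt]; exact interior_subset hqi)
              have := cCl_eq hS hT hf hmem hδ j
              rw [this, hpt]
            · rw [vv_not_mem Si hSi hqi, mul_zero, mul_zero]
        _ = vv Tj hTj (f (q + (ε, ε)) x') j := (apply_vv f x' j).symm
        _ = vv T hTc y0 j := hkey

end ToClosed

/-- **Passing to interiors.** For finite direct sums `M`, `N` of staircase modules, there
is an injective morphism `M → N` with `ε`-trivial cokernel iff there is an injective
morphism `M° → N°` with `ε`-trivial cokernel, where `°` denotes the modules built from
the topological interiors of the staircases. -/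
theorem stmt_17 (F : Type) [Field F] [Fintype F] (a b : ℕ) (ha : 1 ≤ a) (hb : 1 ≤ b)
    (S : Fin a → Set (ℝ × ℝ)) (T : Fin b → Set (ℝ × ℝ))
    (hS : ∀ i, IsStaircase (S i)) (hT : ∀ j, IsStaircase (T j))
    (ε : ℝ) (hε : 0 ≤ ε) :
    (∃ f, IsHom (dirSum fun i => stairMod F (S i) (hS i).upClosed)
            (dirSum fun j => stairMod F (T j) (hT j).upClosed) f ∧
          (∀ p : ℝ × ℝ, Function.Injective (f p)) ∧
          TrivialCoker (dirSum fun i => stairMod F (S i) (hS i).upClosed)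
            (dirSum fun j => stairMod F (T j) (hT j).upClosed) ε f) ↔
    (∃ f, IsHom (dirSum fun i => stairMod F (interior (S i)) (upClosed_interior (hS i).upClosed))
            (dirSum fun j => stairMod F (interior (T j)) (upClosed_interior (hT j).upClosed)) f ∧
          (∀ p : ℝ × ℝ, Function.Injective (f p)) ∧
          TrivialCoker (dirSum fun i => stairMod F (interior (S i)) (upClosed_interior (hS i).upClosed))
            (dirSum fun j => stairMod F (interior (T j)) (upClosed_interior (hT j).upClosed)) ε f) := by
  constructor
  · rintro ⟨f, hf, hinj, hcok⟩
    exact toInterior S T (fun i => (hS i).upClosed) (fun j => (hT j).upClosed)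
      ha hb ε hε f hf hinj hcok
  · rintro ⟨f, hf, hinj, hcok⟩
    exact toClosed hS hT ha hb ε hε f hf hinj hcok
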